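/- For a semi-external 𝕀' and any S ∈ S(X,𝕀'), every polynomial p_Y with Y ⊂ X such that X\Y contains some I ∈ 𝕀' is annihilated by q(D) for every q ∈ Π^0_{#(X\S)}(S^⊥); i.e., P_+(X,𝕀') ⊂ ker Ideal{Π^0_{#(X\S)}(S^⊥) : S ∈ S(X,𝕀')}. -/

import Mathlib

open MvPolynomial

attribute [local instance] Classical.propDecidable

noncomputable section

/-- The linear polynomial `t ↦ v ⬝ t` attached to a vector `v ∈ ℝⁿ`. -/
def lin (n : ℕ) (v : Fin n → ℝ) : MvPolynomial (Fin n) ℂ :=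
  ∑ i, MvPolynomial.C (v i : ℂ) * MvPolynomial.X i

/-- `p_Y`, the product of the linear polynomials over an index set `Y`. -/
def pProd {n : ℕ} {ι : Type*} (x : ι → Fin n → ℝ) (Y : Finset ι) : MvPolynomial (Fin n) ℂ :=
  ∏ i ∈ Y, lin n (x i)

/-- The differential operator `p(D)` (substitute `∂/∂tᵢ` for `tᵢ` in `p`). -/
def pDop {n : ℕ} (p : MvPolynomial (Fin n) ℂ) : Module.End ℂ (MvPolynomial (Fin n) ℂ) :=
  (AddMonoidAlgebra.coeff p).sum fun m c =>
    c • (((List.finRange n).map fun i =>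
      ((MvPolynomial.pderiv i).toLinearMap : Module.End ℂ (MvPolynomial (Fin n) ℂ)) ^ m i).prod)

/-- The kernel of a polynomial ideal: all `q` with `p(D)q = 0` for every `p ∈ I`. -/
def dKer {n : ℕ} (I : Ideal (MvPolynomial (Fin n) ℂ)) : Submodule ℂ (MvPolynomial (Fin n) ℂ) :=
  ⨅ p ∈ I, LinearMap.ker (pDop p)

/-- Standard inner product on `ℝⁿ`. -/
def dotp {n : ℕ} (u v : Fin n → ℝ) : ℝ := ∑ i, u i * v i

/-- `B` is a basis drawn from the multiset `x`. -/
def IsBasisSet {n : ℕ} {ι : Type*} (x : ι → Fin n → ℝ) (B : Finset ι) : Prop :=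
  LinearIndependent ℝ (fun b : {i // i ∈ B} => x b.1) ∧ Submodule.span ℝ (x '' ↑B) = ⊤

/-- `I` is an independent subset of the multiset `x`. -/
def IsIndepSet {n : ℕ} {ι : Type*} (x : ι → Fin n → ℝ) (I : Finset ι) : Prop :=
  LinearIndependent ℝ (fun b : {i // i ∈ I} => x b.1)

/-- `F` is a facet hyperplane of `X`. -/
def IsFacet {n : ℕ} {ι : Type*} (x : ι → Fin n → ℝ) (F : Submodule ℝ (Fin n → ℝ)) : Prop :=
  Module.finrank ℝ F = n - 1 ∧ ∃ Y : Finset ι, Submodule.span ℝ (x '' ↑Y) = F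

/-- `η` is a (nonzero) normal to the subspace `F`. -/
def IsNormal {n : ℕ} (η : Fin n → ℝ) (F : Submodule ℝ (Fin n → ℝ)) : Prop :=
  η ≠ 0 ∧ ∀ v ∈ F, dotp η v = 0

/-- `m(F)`: number of elements of `X` outside a subspace `F`. -/
def mult {n : ℕ} {ι : Type*} [Fintype ι] (x : ι → Fin n → ℝ) (F : Submodule ℝ (Fin n → ℝ)) : ℕ :=
  (Finset.univ.filter fun i => x i ∉ F).card

/-- The central ideal `I(X)`. -/
def centralIdeal {n : ℕ} {ι : Type*} [Fintype ι] (x : ι → Fin n → ℝ) :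
    Ideal (MvPolynomial (Fin n) ℂ) :=
  Ideal.span {p | ∃ F η, IsFacet x F ∧ IsNormal η F ∧ p = lin n η ^ mult x F}

/-- The central `P`-space of the sub-multiset indexed by `A`. -/
def centralPOn {n : ℕ} {ι : Type*} [Fintype ι] [DecidableEq ι] (x : ι → Fin n → ℝ)
    (A : Finset ι) : Submodule ℂ (MvPolynomial (Fin n) ℂ) :=
  Submodule.span ℂ
    {p | ∃ Y : Finset ι, Y ⊆ A ∧
      Module.finrank ℝ (Submodule.span ℝ (x '' ↑(A \ Y))) = n ∧ p = pProd x Y}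

/-- `X(Y)` with respect to the order on indices. -/
def XofY {n N : ℕ} (x : Fin N → Fin n → ℝ) (Y : Finset (Fin N)) : Finset (Fin N) :=
  Finset.univ.filter fun i => i ∉ Y ∧ x i ∉ Submodule.span ℝ (x '' {j | j ∈ Y ∧ j < i})

/-- the valuation `val(Y) = #X(Y)`. -/
def valu {n N : ℕ} (x : Fin N → Fin n → ℝ) (Y : Finset (Fin N)) : ℕ := (XofY x Y).card

/-- `Q_Y := p_{X(Y)}`. -/
def QB {n N : ℕ} (x : Fin N → Fin n → ℝ) (Y : Finset (Fin N)) : MvPolynomial (Fin n) ℂ :=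
  pProd x (XofY x Y)

/-- A semi-external collection of independent sets. -/
def SemiExternal {n N : ℕ} (x : Fin N → Fin n → ℝ) (I' : Set (Finset (Fin N))) : Prop :=
  (∀ I ∈ I', IsIndepSet x I) ∧
  ∀ I ∈ I', ∀ J : Finset (Fin N), IsIndepSet x J →
    Submodule.span ℝ (x '' ↑I) ≤ Submodule.span ℝ (x '' ↑J) → J ∈ I'

/-- `P₊(X, 𝕀')`. -/
def PplusOn {n N : ℕ} (x : Fin N → Fin n → ℝ) (I' : Set (Finset (Fin N))) :
    Submodule ℂ (MvPolynomial (Fin n) ℂ) :=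
  Submodule.span ℂ {p | ∃ Y : Finset (Fin N), (∃ I ∈ I', Y ∩ I = ∅) ∧ p = pProd x Y}

/-- `Π⁰_j(S^⊥)`: homogeneous polynomials of degree `j` annihilated by directional
derivatives along `S`. -/
def homPerp (n j : ℕ) (S : Submodule ℝ (Fin n → ℝ)) : Set (MvPolynomial (Fin n) ℂ) :=
  {p | p ∈ MvPolynomial.homogeneousSubmodule (Fin n) ℂ j ∧ ∀ η ∈ S, pDop (lin n η) p = 0}

/-- `Π⁰_j(W)`: homogeneous polynomials of degree `j` which are functions on `W`
(annihilated by derivatives along `W^⊥`). -/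
def homOn (n j : ℕ) (W : Submodule ℝ (Fin n → ℝ)) : Set (MvPolynomial (Fin n) ℂ) :=
  {p | p ∈ MvPolynomial.homogeneousSubmodule (Fin n) ℂ j ∧
    ∀ η : Fin n → ℝ, (∀ w ∈ W, dotp η w = 0) → pDop (lin n η) p = 0}

/-- `S(X,𝕀')`: spans of independent sets outside `𝕀'`. -/
def exSpans {n N : ℕ} (x : Fin N → Fin n → ℝ) (I' : Set (Finset (Fin N))) :
    Set (Submodule ℝ (Fin n → ℝ)) :=
  {S | ∃ I : Finset (Fin N), IsIndepSet x I ∧ I ∉ I' ∧ Submodule.span ℝ (x '' ↑I) = S}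

/-- The external ideal `I₊(X)`. -/
def IplusIdeal {n : ℕ} {ι : Type*} [Fintype ι] (x : ι → Fin n → ℝ) :
    Ideal (MvPolynomial (Fin n) ℂ) :=
  Ideal.span {p | ∃ F η, IsFacet x F ∧ IsNormal η F ∧ p = lin n η ^ (mult x F + 1)}

/-- The semi-external ideal `I₊(X,𝕀')`. -/
def IplusOn {n N : ℕ} (x : Fin N → Fin n → ℝ) (I' : Set (Finset (Fin N))) :
    Ideal (MvPolynomial (Fin n) ℂ) :=
  IplusIdeal x ⊔ Ideal.span {p | ∃ S ∈ exSpans x I', p ∈ homPerp n (mult x S) S}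

/-- `expPart V c j`: the degree-`j` homogeneous part of `∑_{v ∈ V} c_v e_v`. -/
def expPart (n : ℕ) (V : Finset (Fin n → ℝ)) (c : (Fin n → ℝ) → ℂ) (j : ℕ) :
    MvPolynomial (Fin n) ℂ :=
  ((j.factorial : ℂ))⁻¹ • ∑ v ∈ V, c v • (lin n v) ^ j

/-- The least space `Π(V)` of a finite point set `V`. -/
def leastSpace (n : ℕ) (V : Finset (Fin n → ℝ)) : Submodule ℂ (MvPolynomial (Fin n) ℂ) :=
  Submodule.span ℂ
    {p | ∃ (c : (Fin n → ℝ) → ℂ) (j₀ : ℕ),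
      p = expPart n V c j₀ ∧ p ≠ 0 ∧ ∀ j < j₀, expPart n V c j = 0}

/-- Simplicity of the arrangement `H(X,λ)`. -/
def SimpleArrangement {n N : ℕ} (x : Fin N → Fin n → ℝ) (lam : Fin N → ℝ) : Prop :=
  ∀ Y : Finset (Fin N), (∃ t : Fin n → ℝ, ∀ i ∈ Y, dotp (x i) t = lam i) →
    LinearIndependent ℝ (fun i : {i // i ∈ Y} => x i.1)

/-- `b` is `I`-internally active in `B`. -/
def IActive {n N : ℕ} (x : Fin N → Fin n → ℝ) (Iset B : Finset (Fin N)) (b : Fin N) : Prop :=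
  b ∈ B ∧ b ∈ Iset ∧ ∀ j, x j ∉ Submodule.span ℝ (x '' ↑(B.erase b)) → j ≤ b

/-- `B` is an `I`-internal basis. -/
def IInternal {n N : ℕ} (x : Fin N → Fin n → ℝ) (Iset B : Finset (Fin N)) : Prop :=
  IsBasisSet x B ∧ ∀ b, ¬ IActive x Iset B b

/-- The semi-internal space `P₋(X,I)`. -/
def Pminus {n N : ℕ} (x : Fin N → Fin n → ℝ) (Iset : Finset (Fin N)) :
    Submodule ℂ (MvPolynomial (Fin n) ℂ) :=
  ⨅ b ∈ Iset, centralPOn x (Finset.univ.erase b)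

/-- The semi-internal ideal `I₋(X,I)`. -/
def IminusOn {n N : ℕ} (x : Fin N → Fin n → ℝ) (Iset : Finset (Fin N)) :
    Ideal (MvPolynomial (Fin n) ℂ) :=
  centralIdeal x ⊔
    Ideal.span {p | ∃ F η, IsFacet x F ∧ IsNormal η F ∧ ¬ (x '' ↑Iset ⊆ ↑F) ∧
      p = lin n η ^ (mult x F - 1)}

/-- The semi-internal ideal `J₋(X,I)` of `I`-long polynomials. -/
def JminusOn {n N : ℕ} (x : Fin N → Fin n → ℝ) (Iset : Finset (Fin N)) :
    Ideal (MvPolynomial (Fin n) ℂ) :=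
  Ideal.span {p | ∃ Y : Finset (Fin N),
    (∀ B, IInternal x Iset B → (Y ∩ B).Nonempty) ∧ p = pProd x Y}

/-- Greedy completion `ex(I)` of an independent set by the auxiliary ordered basis `b0`. -/
def exComp {n N : ℕ} (x : Fin N → Fin n → ℝ) (b0 : Fin n → Fin n → ℝ) (I : Finset (Fin N)) :
    Finset (Fin N ⊕ Fin n) :=
  I.image Sum.inl ∪
    (Finset.univ.filter fun k : Fin n =>
      b0 k ∉ Submodule.span ℝ (x '' ↑I ∪ b0 '' {j | j < k})).image Sum.inr

namespace Semiext

variable {n : ℕ}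

abbrev MvP (n : ℕ) := MvPolynomial (Fin n) ℂ

/-- the partial derivative as an endomorphism -/
def pd (n : ℕ) (i : Fin n) : Module.End ℂ (MvP n) := (MvPolynomial.pderiv i).toLinearMap

lemma pderiv_comm (i j : Fin n) (f : MvP n) :
    MvPolynomial.pderiv i (MvPolynomial.pderiv j f) =
    MvPolynomial.pderiv j (MvPolynomial.pderiv i f) := by
  induction f using MvPolynomial.induction_on with
  | C a => simp
  | add p q hp hq => simp [hp, hq]
  | mul_X p k ih =>
    have hXd : ∀ a b : Fin n, MvPolynomial.pderiv a
        ((MvPolynomial.pderiv b) (MvPolynomial.X k : MvP n)) = 0 := by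
      intro a b; by_cases h : k = b
      · subst h; rw [MvPolynomial.pderiv_X_self]; simp
      · rw [MvPolynomial.pderiv_X_of_ne h]; simp
    simp only [MvPolynomial.pderiv_mul, map_add, ih, hXd, mul_zero, add_zero]
    ring

lemma pd_comm (i j : Fin n) : pd n i * pd n j = pd n j * pd n i :=
  LinearMap.ext fun f => pderiv_comm i j f

/-- commutative subalgebra generated by the partial derivatives -/
instance : CommSemiring (Algebra.adjoin ℂ (Set.range (pd n))) :=
  Algebra.adjoinCommSemiringOfComm ℂ (by
    rintro a ⟨i, rfl⟩ b ⟨j, rfl⟩; exact pd_comm i j)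

def gens (n : ℕ) (i : Fin n) : Algebra.adjoin ℂ (Set.range (pd n)) :=
  ⟨pd n i, Algebra.subset_adjoin (Set.mem_range_self i)⟩

/-- `pDop` as an algebra homomorphism -/
def Phi (n : ℕ) : MvP n →ₐ[ℂ] Module.End ℂ (MvP n) :=
  (Subalgebra.val _).comp (MvPolynomial.aeval (gens n))

lemma Phi_X (i : Fin n) : Phi n (MvPolynomial.X i) = pd n i := by
  simp [Phi, gens]

lemma pDop_eq (p : MvP n) : pDop p = Phi n p := by
  have hadd : ∀ p q : MvP n, pDop (p + q) = pDop p + pDop q := by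
    intro p q
    unfold pDop
    rw [AddMonoidAlgebra.coeff_add]
    apply Finsupp.sum_add_index (by simp) (by intro m _ c1 c2; rw [add_smul])
  have hmono : ∀ (m : Fin n →₀ ℕ) (c : ℂ),
      pDop (MvPolynomial.monomial m c) = Phi n (MvPolynomial.monomial m c) := by
    intro m c
    have h1 : pDop (MvPolynomial.monomial m c) =
        c • (((List.finRange n).map fun i => pd n i ^ m i).prod) := by
      unfold pDop
      rw [MvPolynomial.sum_monomial_eq]
      · rfl
      · simp
    have ha : (MvPolynomial.aeval (gens n)) (MvPolynomial.monomial m c) =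
        c • ∏ i, gens n i ^ m i := by
      rw [MvPolynomial.aeval_monomial, Algebra.smul_def]
      congr 1
      rw [Finsupp.prod]
      apply Finset.prod_subset (Finset.subset_univ _)
      intro i _ hi
      simp [Finsupp.notMem_support_iff.mp hi]
    have h2 : Phi n (MvPolynomial.monomial m c) =
        c • (((List.finRange n).map fun i => pd n i ^ m i).prod) := by
      show ((Algebra.adjoin ℂ (Set.range (pd n))).val)
        ((MvPolynomial.aeval (gens n)) (MvPolynomial.monomial m c)) = _
      rw [ha, map_smul]
      congr 1
      rw [Fin.prod_univ_def]
      show ((Algebra.adjoin ℂ (Set.range (pd n))).val).toRingHom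
        ((List.map (fun i => gens n i ^ m i) (List.finRange n)).prod) = _
      rw [map_list_prod ((Algebra.adjoin ℂ (Set.range (pd n))).val).toRingHom, List.map_map]
      congr 1
    rw [h1, h2]
  induction p using MvPolynomial.induction_on' with
  | monomial m c => exact hmono m c
  | add p q ihp ihq => rw [hadd, ihp, ihq, map_add]

end Semiext
namespace Semiext
variable {n : ℕ}
open MvPolynomial

lemma pDop_add (p q : MvP n) : pDop (p + q) = pDop p + pDop q := by
  rw [pDop_eq, pDop_eq, pDop_eq, map_add]

lemma pDop_mul_apply (p q : MvP n) (f : MvP n) :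
    pDop (p * q) f = pDop p (pDop q f) := by
  rw [pDop_eq, pDop_eq, pDop_eq, map_mul]; rfl

lemma pDop_C_apply (c : ℂ) (f : MvP n) : pDop (MvPolynomial.C c) f = c • f := by
  rw [pDop_eq]
  have : Phi n (MvPolynomial.C c) = algebraMap ℂ _ c := by
    simp [Phi]
  rw [this]
  rfl

lemma pDop_zero : pDop (0 : MvP n) = 0 := by rw [pDop_eq, map_zero]

lemma pDop_X_apply (i : Fin n) (f : MvP n) :
    pDop (MvPolynomial.X i) f = MvPolynomial.pderiv i f := by
  rw [pDop_eq, Phi_X]; rfl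

lemma pDop_lin_apply (η : Fin n → ℝ) (f : MvP n) :
    pDop (lin n η) f = ∑ i, (η i : ℂ) • MvPolynomial.pderiv i f := by
  unfold lin
  rw [pDop_eq, map_sum, LinearMap.sum_apply]
  congr 1
  funext i
  rw [map_mul]
  show Phi n (MvPolynomial.C ((η i : ℂ))) (Phi n (MvPolynomial.X i) f) = _
  rw [Phi_X, ← pDop_eq, pDop_C_apply]
  rfl

lemma pDop_lin_mul (η : Fin n → ℝ) (p q : MvP n) :
    pDop (lin n η) (p * q) = pDop (lin n η) p * q + p * pDop (lin n η) q := by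
  simp only [pDop_lin_apply, MvPolynomial.pderiv_mul, smul_add, Finset.sum_add_distrib,
    smul_mul_assoc, mul_smul_comm, Finset.mul_sum, Finset.sum_mul]

lemma pderiv_lin (i : Fin n) (η : Fin n → ℝ) :
    MvPolynomial.pderiv i (lin n η) = MvPolynomial.C (η i : ℂ) := by
  unfold lin
  rw [map_sum]
  rw [Finset.sum_eq_single i]
  · rw [MvPolynomial.pderiv_C_mul, MvPolynomial.pderiv_X_self, mul_one]
  · intro j _ hj
    rw [MvPolynomial.pderiv_C_mul, MvPolynomial.pderiv_X_of_ne hj, mul_zero]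
  · simp

lemma pDop_lin_lin (η : Fin n → ℝ) (j : Fin n) :
    pDop (lin n η) (MvPolynomial.X j : MvP n) = MvPolynomial.C (η j : ℂ) := by
  rw [pDop_lin_apply, Finset.sum_eq_single j]
  · rw [MvPolynomial.pderiv_X_self]
    simp [MvPolynomial.C_eq_smul_one]
  · intro i _ hi
    rw [MvPolynomial.pderiv_X_of_ne (Ne.symm hi), smul_zero]
  · intro h
    exact absurd (Finset.mem_univ j) h

/-- The commutator identity `q(D)(ℓ f) = ℓ q(D) f + (D_η q)(D) f`. -/
lemma pDop_comm_lin (η : Fin n → ℝ) (q : MvP n) :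
    ∀ f : MvP n, pDop q (lin n η * f) =
      lin n η * pDop q f + pDop (pDop (lin n η) q) f := by
  induction q using MvPolynomial.induction_on with
  | C c =>
    intro f
    have hD : pDop (lin n η) (MvPolynomial.C c : MvP n) = 0 := by
      rw [pDop_lin_apply]
      simp [MvPolynomial.pderiv_C]
    rw [pDop_C_apply, pDop_C_apply, hD, pDop_zero, LinearMap.zero_apply, add_zero,
      mul_smul_comm]
  | add p q hp hq =>
    intro f
    rw [pDop_add, map_add, LinearMap.add_apply, LinearMap.add_apply, hp f, hq f,
      pDop_add, LinearMap.add_apply]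
    ring
  | mul_X p i ih =>
    intro f
    rw [pDop_mul_apply, pDop_X_apply, MvPolynomial.pderiv_mul, pderiv_lin, map_add,
      ih (MvPolynomial.pderiv i f)]
    have h1 : pDop p (MvPolynomial.C ((η i : ℂ)) * f) = (η i : ℂ) • pDop p f := by
      rw [MvPolynomial.C_mul', map_smul]
    have h2 : pDop (pDop (lin n η) (p * MvPolynomial.X i)) f =
        pDop (pDop (lin n η) p) (MvPolynomial.pderiv i f) + (η i : ℂ) • pDop p f := by
      rw [pDop_lin_mul, pDop_lin_lin, pDop_add, LinearMap.add_apply, pDop_mul_apply,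
        pDop_X_apply, pDop_mul_apply, pDop_C_apply, map_smul]
    rw [h1, h2, pDop_mul_apply, pDop_X_apply]
    ring

end Semiext
namespace Semiext
variable {n : ℕ}
open MvPolynomial

lemma degree_key (i : Fin n) (f : MvP n) (hf : MvPolynomial.pderiv i f ≠ 0) :
    (MvPolynomial.pderiv i f).totalDegree + 1 ≤ f.totalDegree := by
  classical
  have hrepr : MvPolynomial.pderiv i f = ∑ s ∈ f.support,
      MvPolynomial.monomial (s - Finsupp.single i 1) (MvPolynomial.coeff s f * s i) := by
    conv_lhs => rw [f.as_sum]
    rw [map_sum]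
    simp_rw [MvPolynomial.pderiv_monomial]
  have hsupp : ∀ m ∈ (MvPolynomial.pderiv i f).support,
      (m.sum fun _ e => e) + 1 ≤ f.totalDegree := by
    intro m hm
    rw [hrepr] at hm
    obtain ⟨s, hs, hms⟩ := Finset.mem_biUnion.mp (MvPolynomial.support_sum hm)
    have hm1 : m = s - Finsupp.single i 1 :=
      Finset.mem_singleton.mp (MvPolynomial.support_monomial_subset hms)
    have hsi : s i ≠ 0 := by
      intro h0
      rw [MvPolynomial.mem_support_iff, MvPolynomial.coeff_monomial] at hms
      simp [h0] at hms
    have hsum : (m.sum fun _ e => e) + 1 ≤ s.sum fun _ e => e := by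
      rw [Finsupp.sum_fintype _ _ (fun _ => rfl), Finsupp.sum_fintype _ _ (fun _ => rfl)]
      have hlt : ∑ j, m j < ∑ j, s j := by
        apply Finset.sum_lt_sum
        · intro j _
          rw [hm1, Finsupp.tsub_apply]
          exact Nat.sub_le _ _
        · refine ⟨i, Finset.mem_univ i, ?_⟩
          rw [hm1, Finsupp.tsub_apply, Finsupp.single_eq_same]
          omega
      omega
    exact hsum.trans (MvPolynomial.le_totalDegree hs)
  have hne : (MvPolynomial.pderiv i f).support.Nonempty :=
    MvPolynomial.support_nonempty.mpr hf
  obtain ⟨m, hm, hsup⟩ := Finset.exists_mem_eq_sup _ hne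
    (fun m : Fin n →₀ ℕ => m.sum fun _ e => e)
  rw [MvPolynomial.totalDegree, hsup]
  exact hsupp m hm

lemma pow_pd_deg (i : Fin n) (k : ℕ) (d : ℕ) :
    ∀ g : MvP n, g.totalDegree < d + k →
      (pd n i ^ k) g = 0 ∨ ((pd n i ^ k) g).totalDegree < d := by
  induction k with
  | zero =>
    intro g h
    right
    simpa using h
  | succ k ih =>
    intro g h
    rw [pow_succ, Module.End.mul_apply]
    by_cases h0 : MvPolynomial.pderiv i g = 0
    · left
      have : pd n i g = 0 := h0
      rw [this, map_zero]
    · have hk := degree_key i g h0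
      have : (MvPolynomial.pderiv i g).totalDegree < d + k := by omega
      exact ih (MvPolynomial.pderiv i g) this

lemma list_pd_deg (m' : Fin n →₀ ℕ) (l : List (Fin n)) :
    ∀ d : ℕ, ∀ f : MvP n, f.totalDegree < d + (l.map fun i => m' i).sum →
      ((l.map fun i => pd n i ^ m' i).prod) f = 0 ∨
      (((l.map fun i => pd n i ^ m' i).prod) f).totalDegree < d := by
  induction l with
  | nil =>
    intro d f h
    right
    simpa using h
  | cons i l ih =>
    intro d f h
    rw [List.map_cons, List.prod_cons, Module.End.mul_apply]
    have h' : f.totalDegree < (d + m' i) + (l.map fun i => m' i).sum := by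
      rw [List.map_cons, List.sum_cons] at h
      omega
    rcases ih (d + m' i) f h' with h0 | hd
    · left
      rw [h0, map_zero]
    · exact pow_pd_deg i (m' i) d _ hd

lemma hom_support_sum {m : ℕ} {q : MvP n} (hq : q.IsHomogeneous m)
    {s : Fin n →₀ ℕ} (hs : s ∈ q.support) : ∑ i, s i = m := by
  have h1 := hq (MvPolynomial.mem_support_iff.mp hs)
  rw [← h1, Finsupp.weight_apply]
  rw [Finsupp.sum_fintype _ _ (fun _ => by simp)]
  simp

lemma pDop_hom_kill {m : ℕ} (q f : MvP n) (hq : q.IsHomogeneous m)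
    (hf : f.totalDegree < m) : pDop q f = 0 := by
  unfold pDop
  rw [Finsupp.sum, LinearMap.sum_apply]
  apply Finset.sum_eq_zero
  intro s hs
  rw [LinearMap.smul_apply]
  have hsum : ((List.finRange n).map fun i => (s : Fin n → ℕ) i).sum = m := by
    rw [← Fin.sum_univ_def]
    exact hom_support_sum hq hs
  rcases list_pd_deg s (List.finRange n) 0 f (by rw [hsum]; omega) with h0 | hd
  · exact smul_eq_zero_of_right _ h0
  · exact absurd hd (Nat.not_lt_zero _)

end Semiext

namespace Semiext
variable {n : ℕ}
open MvPolynomial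

lemma lin_isHomogeneous (v : Fin n → ℝ) : (lin n v).IsHomogeneous 1 := by
  unfold lin
  apply MvPolynomial.IsHomogeneous.sum
  intro i _
  simpa using (MvPolynomial.isHomogeneous_C _ ((v i : ℂ))).mul (MvPolynomial.isHomogeneous_X _ i)

lemma pProd_isHomogeneous {ι : Type*} (x : ι → Fin n → ℝ) (Y : Finset ι) :
    (pProd x Y).IsHomogeneous Y.card := by
  unfold pProd
  have := MvPolynomial.IsHomogeneous.prod Y (fun i => lin n (x i)) (fun _ => 1)
    (fun i _ => lin_isHomogeneous (x i))
  simpa using this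

lemma pull_out {ι : Type*} (x : ι → Fin n → ℝ) (q : MvP n) (Z : Finset ι)
    (hq : ∀ i ∈ Z, pDop (lin n (x i)) q = 0) :
    ∀ f : MvP n, pDop q ((∏ i ∈ Z, lin n (x i)) * f) =
      (∏ i ∈ Z, lin n (x i)) * pDop q f := by
  classical
  induction Z using Finset.induction_on with
  | empty => intro f; simp
  | insert a Z' hnot ih =>
    intro f
    rw [Finset.prod_insert hnot, mul_assoc]
    rw [pDop_comm_lin, hq a (Finset.mem_insert_self a Z'), pDop_zero,
      LinearMap.zero_apply, add_zero, ih (fun i hi => hq i (Finset.mem_insert_of_mem hi)) f,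
      mul_assoc]

end Semiext


open Semiext in
theorem semiexternal_annihilation (n N : ℕ) (x : Fin N → Fin n → ℝ)
    (hx0 : ∀ i, x i ≠ 0) (hx : Submodule.span ℝ (Set.range x) = ⊤)
    (I' : Set (Finset (Fin N))) (hI' : SemiExternal x I') :
    (∀ S ∈ exSpans x I', ∀ Y : Finset (Fin N), (∃ I ∈ I', Y ∩ I = ∅) →
      ∀ q ∈ homPerp n (mult x S) S, pDop q (pProd x Y) = 0) ∧
    PplusOn x I' ≤ dKer (Ideal.span {p | ∃ S ∈ exSpans x I',
      p ∈ homPerp n (mult x S) S}) := by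
  have part1 : ∀ S ∈ exSpans x I', ∀ Y : Finset (Fin N), (∃ I ∈ I', Y ∩ I = ∅) →
      ∀ q ∈ homPerp n (mult x S) S, pDop q (pProd x Y) = 0 := by
    intro S hS Y hY q hq
    obtain ⟨I₀, hI₀ind, hI₀not, hspan⟩ := hS
    obtain ⟨I, hI, hYI⟩ := hY
    obtain ⟨hqhom, hqperp⟩ := hq
    set Y₁ := Y.filter (fun i => x i ∈ S) with hY₁
    set Y₂ := Y.filter (fun i => x i ∉ S) with hY₂
    have hsplit : pProd x Y = (∏ i ∈ Y₁, lin n (x i)) * pProd x Y₂ := by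
      unfold pProd
      rw [← Finset.prod_filter_mul_prod_filter_not Y (fun i => x i ∈ S)]
    have hcard : Y₂.card < mult x S := by
      have hsub : Y₂ ⊆ Finset.univ.filter (fun i => x i ∉ S) := by
        intro i hi
        simp only [hY₂, Finset.mem_filter] at hi ⊢
        exact ⟨Finset.mem_univ i, hi.2⟩
      by_contra hle
      push_neg at hle
      have heq : Y₂ = Finset.univ.filter (fun i => x i ∉ S) :=
        Finset.eq_of_subset_of_card_le hsub hle
      have hIS : ∀ i ∈ I, x i ∈ S := by
        intro i hiI
        by_contra hxS
        have : i ∈ Y₂ := by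
          rw [heq]
          simp only [Finset.mem_filter]
          exact ⟨Finset.mem_univ i, hxS⟩
        have hiY : i ∈ Y := (Finset.mem_filter.mp this).1
        have : i ∈ Y ∩ I := Finset.mem_inter.mpr ⟨hiY, hiI⟩
        rw [hYI] at this
        exact absurd this (Finset.notMem_empty i)
      have hle2 : Submodule.span ℝ (x '' ↑I) ≤ Submodule.span ℝ (x '' ↑I₀) := by
        rw [hspan]
        apply Submodule.span_le.mpr
        rintro _ ⟨i, hi, rfl⟩
        exact hIS i hi
      exact hI₀not (hI'.2 I hI I₀ hI₀ind hle2)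
    have hdeg : (pProd x Y₂).totalDegree < mult x S :=
      lt_of_le_of_lt (pProd_isHomogeneous x Y₂).totalDegree_le hcard
    have hkill : pDop q (pProd x Y₂) = 0 :=
      pDop_hom_kill q (pProd x Y₂) hqhom hdeg
    rw [hsplit, pull_out x q Y₁ (fun i hi => hqperp (x i) (Finset.mem_filter.mp hi).2),
      hkill, mul_zero]
  refine ⟨part1, ?_⟩
  apply Submodule.span_le.mpr
  rintro p ⟨Y, hY, rfl⟩
  have hall : ∀ p ∈ Ideal.span {p | ∃ S ∈ exSpans x I', p ∈ homPerp n (mult x S) S},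
      pDop p (pProd x Y) = 0 := by
    intro p hp
    induction hp using Submodule.span_induction with
    | mem p hmem =>
      obtain ⟨S, hS, hpS⟩ := hmem
      exact part1 S hS Y hY p hpS
    | zero => rw [pDop_zero]; rfl
    | add a b _ _ iha ihb => rw [pDop_add, LinearMap.add_apply, iha, ihb, add_zero]
    | smul r a _ iha =>
      rw [smul_eq_mul, pDop_mul_apply, iha, map_zero]
  simp only [SetLike.mem_coe, dKer, Submodule.mem_iInf, LinearMap.mem_ker]
  exact hall
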